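/- Let S, T be W-semigroups and φ, ψ : S → T be W-morphisms. For x, y ∈ T set x ∼₀ y if there are z ∈ T and a, b ∈ S with x = z + φ(a) + ψ(b) and y = z + φ(b) + ψ(a), and let ∼ be the transitive closure of ∼₀; for x, y ∈ T set x ≾₀ y if there are a, b ∈ T with x ∼ a ≺ b ∼ y, and let ≾ be the transitive closure of ≾₀. Then: (i) ∼ is an additive congruence on T; (ii) ≾ is a transitive, additive relation; (iii) whenever u, x, y ∈ T satisfy u ≾ x ∼ y, there exists y' ∈ T with u ≾ y' ≺ y. -/

import Mathlib

/-!
STATEMENT 4: Let S, T be W-semigroups and φ, ψ : S → T W-morphisms.  With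
x ∼₀ y iff x = z + φ(a) + ψ(b) and y = z + φ(b) + ψ(a) for some z, a, b, and
∼ the transitive closure of ∼₀; and x ≾₀ y iff x ∼ a ≺ b ∼ y for some a, b, and
≾ the transitive closure of ≾₀: (i) ∼ is an additive congruence on T; (ii) ≾ is a
transitive, additive relation; (iii) u ≾ x ∼ y implies u ≾ y' ≺ y for some y'.
-/

universe u v w

/-- The axioms of a `W`-semigroup: a commutative monoid with a transitive
auxiliary relation `≺` satisfying `0 ≺ x`, (W1), (W3) and (W4). -/
structure WAxioms (M : Type u) [AddCommMonoid M] (r : M → M → Prop) : Prop where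
  trans : ∀ {x y z : M}, r x y → r y z → r x z
  zero_rel : ∀ x : M, r 0 x
  W1 : ∀ x : M, ∃ s : ℕ → M, (∀ n, r (s n) (s (n + 1))) ∧ (∀ n, r (s n) x) ∧
        ∀ y : M, r y x → ∃ n, r y (s n)
  W3 : ∀ {x' x y' y : M}, r x' x → r y' y → r (x' + y') (x + y)
  W4 : ∀ {x y z : M}, r x (y + z) → ∃ y' z' : M, r y' y ∧ r z' z ∧ r x (y' + z')

/-- A `W`-morphism: preserves addition, `0` and the auxiliary relation, and is
continuous: whenever `y ≺ f x` there is `x' ≺ x` with `y ≺ f x'`. -/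
structure IsWHom {M : Type u} {N : Type v} [AddCommMonoid M] [AddCommMonoid N]
    (rM : M → M → Prop) (rN : N → N → Prop) (f : M → N) : Prop where
  map_zero : f 0 = 0
  map_add : ∀ x y : M, f (x + y) = f x + f y
  map_rel : ∀ {x y : M}, rM x y → rN (f x) (f y)
  cont : ∀ (x : M) (y : N), rN y (f x) → ∃ x' : M, rM x' x ∧ rN y (f x')

theorem WAxioms.transitive {M : Type u} [AddCommMonoid M] {r : M → M → Prop}
    (h : WAxioms M r) : Transitive r := fun _ _ _ hxy hyz => h.trans hxy hyz

theorem isWHom_id {M : Type u} [AddCommMonoid M] {r : M → M → Prop} (h : WAxioms M r) :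
    IsWHom r r (id : M → M) := by
  refine ⟨rfl, fun _ _ => rfl, fun hxy => hxy, ?_⟩
  intro x y hyx
  obtain ⟨s, _, hsx, hcof⟩ := h.W1 x
  obtain ⟨n, hn⟩ := hcof y hyx
  exact ⟨s n, hsx n, hn⟩

theorem IsWHom.comp {M : Type u} {N : Type v} {P : Type w} [AddCommMonoid M]
    [AddCommMonoid N] [AddCommMonoid P] {rM : M → M → Prop} {rN : N → N → Prop}
    {rP : P → P → Prop} (hP : Transitive rP) {g : N → P} {f : M → N}
    (hg : IsWHom rN rP g) (hf : IsWHom rM rN f) : IsWHom rM rP (g ∘ f) := by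
  refine ⟨?_, ?_, ?_, ?_⟩
  · show g (f 0) = 0
    rw [hf.map_zero, hg.map_zero]
  · intro x y
    show g (f (x + y)) = g (f x) + g (f y)
    rw [hf.map_add, hg.map_add]
  · exact fun hxy => hg.map_rel (hf.map_rel hxy)
  · intro x y hy
    obtain ⟨u, hu, hyu⟩ := hg.cont (f x) y hy
    obtain ⟨x', hx', hux'⟩ := hf.cont x u hu
    exact ⟨x', hx', hP hyu (hg.map_rel hux')⟩

/-- The category `W` of `W`-semigroups: objects are `W`-semigroups, morphisms are
`W`-morphisms. -/
structure WCat : Type (u + 1) where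
  carrier : Type u
  [addCommMonoid : AddCommMonoid carrier]
  rel : carrier → carrier → Prop
  ax : WAxioms carrier rel

attribute [instance] WCat.addCommMonoid

instance : CategoryTheory.Category WCat.{u} where
  Hom S T := { f : S.carrier → T.carrier // IsWHom S.rel T.rel f }
  id S := ⟨id, isWHom_id S.ax⟩
  comp := fun {X Y Z} f g =>
    ⟨g.1 ∘ f.1, g.2.comp Z.ax.transitive f.2⟩

section

variable {S T : Type u} [AddCommMonoid S] [AddCommMonoid T]

/-- The relation `∼₀`. -/
def SimZero (φ ψ : S → T) (x y : T) : Prop :=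
  ∃ z : T, ∃ a b : S, x = z + φ a + ψ b ∧ y = z + φ b + ψ a

/-- The relation `∼`: the transitive closure of `∼₀`. -/
def Sim (φ ψ : S → T) : T → T → Prop := Relation.TransGen (SimZero φ ψ)

/-- The relation `≾₀`: `x ≾₀ y` iff `x ∼ a ≺ b ∼ y` for some `a, b`. -/
def WSubZero (rT : T → T → Prop) (φ ψ : S → T) (x y : T) : Prop :=
  ∃ a b : T, Sim φ ψ x a ∧ rT a b ∧ Sim φ ψ b y

/-- The relation `≾`: the transitive closure of `≾₀`. -/
def WSub (rT : T → T → Prop) (φ ψ : S → T) : T → T → Prop :=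
  Relation.TransGen (WSubZero rT φ ψ)

namespace SimWsubAux

variable {rS : S → S → Prop} {rT : T → T → Prop} {φ ψ : S → T}

lemma transGen_cases_head {α : Type u} {r : α → α → Prop} {a b : α}
    (h : Relation.TransGen r a b) : r a b ∨ ∃ c, r a c ∧ Relation.TransGen r c b := by
  induction h using Relation.TransGen.head_induction_on with
  | single h => exact Or.inl h
  | head h' h _ => exact Or.inr ⟨_, h', h⟩

lemma winterp {M : Type u} [AddCommMonoid M] {r : M → M → Prop} (h : WAxioms M r)
    {a b : M} (hab : r a b) : ∃ m, r a m ∧ r m b := by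
  obtain ⟨s, _, hsb, hcof⟩ := h.W1 b
  obtain ⟨n, hn⟩ := hcof a hab
  exact ⟨s n, hn, hsb n⟩

lemma simZero_refl (hφ : IsWHom rS rT φ) (hψ : IsWHom rS rT ψ) (x : T) :
    SimZero φ ψ x x :=
  ⟨x, 0, 0, by simp [hφ.map_zero, hψ.map_zero], by simp [hφ.map_zero, hψ.map_zero]⟩

lemma sim_refl (hφ : IsWHom rS rT φ) (hψ : IsWHom rS rT ψ) (x : T) :
    Sim φ ψ x x :=
  Relation.TransGen.single (simZero_refl hφ hψ x)

lemma simZero_symm {x y : T} (h : SimZero φ ψ x y) : SimZero φ ψ y x := by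
  obtain ⟨z, a, b, h1, h2⟩ := h
  exact ⟨z, b, a, h2, h1⟩

lemma sim_symm {x y : T} (h : Sim φ ψ x y) : Sim φ ψ y x := by
  induction h with
  | single h => exact Relation.TransGen.single (simZero_symm h)
  | tail _ h ih => exact Relation.TransGen.head (simZero_symm h) ih

lemma simZero_add (hφ : IsWHom rS rT φ) (hψ : IsWHom rS rT ψ) {x y u v : T}
    (h : SimZero φ ψ x y) (h' : SimZero φ ψ u v) : SimZero φ ψ (x + u) (y + v) := by
  obtain ⟨z, a, b, h1, h2⟩ := h
  obtain ⟨w, c, d, h1', h2'⟩ := h'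
  subst h1 h2 h1' h2'
  exact ⟨z + w, a + c, b + d, by rw [hφ.map_add, hψ.map_add]; abel,
    by rw [hφ.map_add, hψ.map_add]; abel⟩

lemma sim_add_right (hφ : IsWHom rS rT φ) (hψ : IsWHom rS rT ψ) {x y : T} (u : T)
    (h : Sim φ ψ x y) : Sim φ ψ (x + u) (y + u) := by
  induction h with
  | single h => exact Relation.TransGen.single (simZero_add hφ hψ h (simZero_refl hφ hψ u))
  | tail _ h ih =>
      exact Relation.TransGen.tail ih (simZero_add hφ hψ h (simZero_refl hφ hψ u))

lemma sim_add (hφ : IsWHom rS rT φ) (hψ : IsWHom rS rT ψ) {x y u v : T}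
    (h : Sim φ ψ x y) (h' : Sim φ ψ u v) : Sim φ ψ (x + u) (y + v) := by
  refine Relation.TransGen.trans (sim_add_right hφ hψ u h) ?_
  rw [add_comm y u, add_comm y v]
  exact sim_add_right hφ hψ y h'

/-- Key continuity lemma: a `≺`-predecessor of `b` can be pushed along a
single swap `b ∼₀ c` to a `≺`-predecessor of `c`. -/
lemma key (hS : WAxioms S rS) (hT : WAxioms T rT)
    (hφ : IsWHom rS rT φ) (hψ : IsWHom rS rT ψ) {a b c : T}
    (hab : rT a b) (hbc : SimZero φ ψ b c) :
    ∃ d c', rT a d ∧ SimZero φ ψ d c' ∧ rT c' c := by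
  obtain ⟨z, p, q, hb, hc⟩ := hbc
  subst hb hc
  obtain ⟨e, v, he, hv, hav⟩ := hT.W4 hab
  obtain ⟨z', u', hz', hu, heu⟩ := hT.W4 he
  obtain ⟨p', hp', hup⟩ := hφ.cont p u' hu
  obtain ⟨q', hq', hvq⟩ := hψ.cont q v hv
  obtain ⟨q₁, hq'q₁, hq₁q⟩ := winterp hS hq'
  obtain ⟨z₁, hz'z₁, hz₁z⟩ := winterp hT hz'
  refine ⟨z₁ + φ p' + ψ q₁, z₁ + φ q₁ + ψ p', ?_, ⟨z₁, p', q₁, rfl, rfl⟩, ?_⟩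
  · exact hT.trans hav (hT.trans (hT.W3 heu hvq)
      (hT.W3 (hT.W3 hz'z₁ hup) (hψ.map_rel hq'q₁)))
  · exact hT.W3 (hT.W3 hz₁z (hφ.map_rel hq₁q)) (hψ.map_rel hp')

/-- Pushing a `≺`-predecessor along a whole `∼`-chain. -/
lemma pushL (hS : WAxioms S rS) (hT : WAxioms T rT)
    (hφ : IsWHom rS rT φ) (hψ : IsWHom rS rT ψ) {b c : T}
    (hbc : Sim φ ψ b c) :
    ∀ a : T, rT a b → ∃ c', WSub rT φ ψ a c' ∧ rT c' c := by
  induction hbc using Relation.TransGen.head_induction_on with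
  | single h =>
      intro a hab
      obtain ⟨d, c', had, hdc', hc'⟩ := key hS hT hφ hψ hab h
      exact ⟨c', Relation.TransGen.single
        ⟨a, d, sim_refl hφ hψ a, had, Relation.TransGen.single hdc'⟩, hc'⟩
  | head h' _ ihp =>
      intro a hab
      obtain ⟨d, b₁', had, hdb₁', hb₁'⟩ := key hS hT hφ hψ hab h'
      obtain ⟨c', hws, hc'⟩ := ihp b₁' hb₁'
      refine ⟨c', Relation.TransGen.head
        ⟨a, d, sim_refl hφ hψ a, had, Relation.TransGen.single hdb₁'⟩ hws, hc'⟩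

lemma sim_wsub (hφ : IsWHom rS rT φ) (hψ : IsWHom rS rT ψ) {w a y : T}
    (hwa : Sim φ ψ w a) (h : WSub rT φ ψ a y) : WSub rT φ ψ w y := by
  induction h using Relation.TransGen.head_induction_on with
  | single h =>
      obtain ⟨p, q, h1, h2, h3⟩ := h
      exact Relation.TransGen.single ⟨p, q, Relation.TransGen.trans hwa h1, h2, h3⟩
  | head h' h ihp =>
      obtain ⟨p, q, h1, h2, h3⟩ := h'
      exact Relation.TransGen.head ⟨p, q, Relation.TransGen.trans hwa h1, h2, h3⟩ h

lemma wsub_sim (hφ : IsWHom rS rT φ) (hψ : IsWHom rS rT ψ) {p q r : T}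
    (h : WSub rT φ ψ p q) (hqr : Sim φ ψ q r) : WSub rT φ ψ p r := by
  cases h with
  | single h =>
      obtain ⟨a, b, h1, h2, h3⟩ := h
      exact Relation.TransGen.single ⟨a, b, h1, h2, Relation.TransGen.trans h3 hqr⟩
  | tail h1 h2 =>
      obtain ⟨a, b, ha, hb, hc⟩ := h2
      exact Relation.TransGen.tail h1 ⟨a, b, ha, hb, Relation.TransGen.trans hc hqr⟩

lemma wsubZero_add (hS : WAxioms S rS) (hT : WAxioms T rT)
    (hφ : IsWHom rS rT φ) (hψ : IsWHom rS rT ψ) {x y u v : T}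
    (h : WSubZero rT φ ψ x y) (h' : WSubZero rT φ ψ u v) :
    WSubZero rT φ ψ (x + u) (y + v) := by
  obtain ⟨a, b, h1, h2, h3⟩ := h
  obtain ⟨c, d, h1', h2', h3'⟩ := h'
  exact ⟨a + c, b + d, sim_add hφ hψ h1 h1', hT.W3 h2 h2', sim_add hφ hψ h3 h3'⟩

/-- `a ≺ b` and `u ≾ v` imply `a + u ≾ b + v`. -/
lemma rel_add_wsub (hS : WAxioms S rS) (hT : WAxioms T rT)
    (hφ : IsWHom rS rT φ) (hψ : IsWHom rS rT ψ) {u v : T}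
    (h : WSub rT φ ψ u v) : ∀ a b : T, rT a b → WSub rT φ ψ (a + u) (b + v) := by
  induction h with
  | single h =>
      intro a b hab
      obtain ⟨c, d, h1, h2, h3⟩ := h
      exact Relation.TransGen.single ⟨a + c, b + d,
        sim_add hφ hψ (sim_refl hφ hψ a) h1, hT.W3 hab h2,
        sim_add hφ hψ (sim_refl hφ hψ b) h3⟩
  | tail _ h2 ih =>
      intro a b hab
      obtain ⟨m, ham, hmb⟩ := winterp hT hab
      obtain ⟨c, d, h1', h2', h3'⟩ := h2
      refine Relation.TransGen.tail (ih a m ham) ⟨m + c, b + d,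
        sim_add hφ hψ (sim_refl hφ hψ m) h1', hT.W3 hmb h2',
        sim_add hφ hψ (sim_refl hφ hψ b) h3'⟩

lemma wsub_add (hS : WAxioms S rS) (hT : WAxioms T rT)
    (hφ : IsWHom rS rT φ) (hψ : IsWHom rS rT ψ) {x y : T}
    (h : WSub rT φ ψ x y) :
    ∀ u v : T, WSub rT φ ψ u v → WSub rT φ ψ (x + u) (y + v) := by
  induction h using Relation.TransGen.head_induction_on with
  | single h =>
      intro u v huv
      obtain ⟨a, b, h1, h2, h3⟩ := h
      refine sim_wsub hφ hψ (sim_add hφ hψ h1 (sim_refl hφ hψ u)) ?_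
      refine wsub_sim hφ hψ ?_ (sim_add hφ hψ h3 (sim_refl hφ hψ v))
      exact rel_add_wsub hS hT hφ hψ huv a b h2
  | head h' hxy ih =>
      intro u v huv
      rcases transGen_cases_head huv with huv | ⟨u₁, h1, h2⟩
      · obtain ⟨a, b, h1, h2, h3⟩ := h'
        obtain ⟨c, d, hc, hcd, hd⟩ := huv
        obtain ⟨m, hcm, hmd⟩ := winterp hT hcd
        refine Relation.TransGen.head
          (⟨a + c, b + m, sim_add hφ hψ h1 hc, hT.W3 h2 hcm,
            sim_add hφ hψ h3 (sim_refl hφ hψ m)⟩ :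
            WSubZero rT φ ψ _ (_ + m)) ?_
        refine wsub_sim hφ hψ ?_ (sim_add hφ hψ (sim_refl hφ hψ y) hd)
        have := rel_add_wsub hS hT hφ hψ hxy m d hmd
        rwa [add_comm m _, add_comm d _] at this
      · exact Relation.TransGen.head
          (wsubZero_add hS hT hφ hψ h' h1) (ih u₁ v h2)

end SimWsubAux

/-- **Lemma (preparation for coequalizers in W).** -/
theorem sim_wsub_lemma (rS : S → S → Prop) (rT : T → T → Prop)
    (hS : WAxioms S rS) (hT : WAxioms T rT) (φ ψ : S → T)
    (hφ : IsWHom rS rT φ) (hψ : IsWHom rS rT ψ) :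
    (Equivalence (Sim φ ψ) ∧
      ∀ x y u v : T, Sim φ ψ x y → Sim φ ψ u v → Sim φ ψ (x + u) (y + v)) ∧
    (Transitive (WSub rT φ ψ) ∧
      ∀ x y u v : T, WSub rT φ ψ x y → WSub rT φ ψ u v →
        WSub rT φ ψ (x + u) (y + v)) ∧
    (∀ u x y : T, WSub rT φ ψ u x → Sim φ ψ x y →
      ∃ y' : T, WSub rT φ ψ u y' ∧ rT y' y) := by
  open SimWsubAux in
  refine ⟨⟨⟨sim_refl hφ hψ, fun h => sim_symm h, fun h h' => Relation.TransGen.trans h h'⟩,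
    fun x y u v h h' => sim_add hφ hψ h h'⟩,
    ⟨fun _ _ _ h h' => Relation.TransGen.trans h h',
      fun x y u v h h' => wsub_add hS hT hφ hψ h u v h'⟩, ?_⟩
  intro u x y hux hxy
  have final : ∀ {w : T}, WSubZero rT φ ψ w x →
      ∃ y' : T, WSub rT φ ψ w y' ∧ rT y' y := by
    intro w hw
    obtain ⟨a, b, h1, h2, h3⟩ := hw
    obtain ⟨y', hws, hy'⟩ := pushL hS hT hφ hψ (Relation.TransGen.trans h3 hxy) a h2
    exact ⟨y', sim_wsub hφ hψ h1 hws, hy'⟩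
  cases hux with
  | single h =>
      exact final h
  | tail h1 h2 =>
      obtain ⟨y', hws, hy'⟩ := final h2
      exact ⟨y', Relation.TransGen.trans h1 hws, hy'⟩

end
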